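/- Let A be a finite-dimensional commutative Frobenius algebra over ℝ with basis e₁,…,e_n and unity e. Define F*(x) = (1/2)⟨x², log x²⟩ on the set of invertible elements x of A for which log x² is defined (e.g. x in a neighborhood of e). Then the third derivatives of F* satisfy ∂³F*/∂xᵅ∂xᵝ∂xᵞ = 2⟨e_α·e_β·e_γ, x⁻¹⟩. -/

import Mathlib

open scoped BigOperators

/-- Partial derivative in the `i`-th coordinate direction. -/
noncomputable def pd {n : ℕ} (f : (Fin n → ℝ) → ℝ) (i : Fin n) (x : Fin n → ℝ) : ℝ :=
  fderiv ℝ f x (Pi.single i 1)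

private lemma unit_sq_helper {A : Type*} [CommRing A] (u : Aˣ) (k : A) :
    (u : A) * (Ring.inverse ((u : A) * (u : A)) * ((u : A) * k + (u : A) * k)) = k + k := by
  rw [← Units.val_mul, Ring.inverse_unit, mul_inv, Units.val_mul]
  have h := u.mul_inv
  calc (u : A) * ((↑u⁻¹ * ↑u⁻¹ : A) * ((u : A) * k + (u : A) * k))
      = ((u : A) * ↑u⁻¹) * (((u : A) * ↑u⁻¹) * (k + k)) := by ring
    _ = k + k := by rw [h]; ring

private lemma unit_sq_helper2 {A : Type*} [CommRing A] (u : Aˣ) (k : A) :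
    Ring.inverse ((u : A) * (u : A)) * ((u : A) * k + (u : A) * k)
      = Ring.inverse (u : A) * k + Ring.inverse (u : A) * k := by
  rw [← Units.val_mul, Ring.inverse_unit, Ring.inverse_unit, mul_inv, Units.val_mul]
  have h := u.inv_mul
  calc (↑u⁻¹ * ↑u⁻¹ : A) * ((u : A) * k + (u : A) * k)
      = ((↑u⁻¹ : A) * ↑u) * ((↑u⁻¹ : A) * k + (↑u⁻¹ : A) * k) := by ring
    _ = (↑u⁻¹ : A) * k + (↑u⁻¹ : A) * k := by rw [h]; ring

set_option maxHeartbeats 2000000 in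
theorem stmt_5 {n : ℕ} (A : Type*) [NormedCommRing A] [NormedAlgebra ℝ A]
    [FiniteDimensional ℝ A]
    (B : LinearMap.BilinForm ℝ A) (hsymm : B.IsSymm) (hnd : B.Nondegenerate)
    (hBinv : ∀ u v w : A, B (u * v) w = B u (v * w))
    (e : Module.Basis (Fin n) ℝ A)
    (U : Set A) (hU : IsOpen U) (hUinv : ∀ y ∈ U, IsUnit y)
    (L : A → A)
    (hL : ∀ y ∈ U, HasFDerivAt L
      (LinearMap.toContinuousLinearMap (LinearMap.mulLeft ℝ (Ring.inverse y))) y)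
    (Fc : (Fin n → ℝ) → ℝ)
    (hFc : ∀ c, Fc c = (1/2) * B ((∑ i, c i • e i) * (∑ i, c i • e i))
        (L ((∑ i, c i • e i) * (∑ i, c i • e i)))) :
    ∀ c : Fin n → ℝ, IsUnit (∑ i, c i • e i) →
      (∑ i, c i • e i) * (∑ i, c i • e i) ∈ U →
      ∀ α β γ : Fin n,
        pd (pd (pd Fc α) β) γ c =
          2 * B (e α * e β * e γ) (Ring.inverse (∑ i, c i • e i)) := by
  intro c hcu hcU α β γ
  classical
  -- the coordinate parametrization, as a continuous linear map
  set Φ : (Fin n → ℝ) →L[ℝ] A :=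
    LinearMap.toContinuousLinearMap (e.equivFun.symm : (Fin n → ℝ) →ₗ[ℝ] A) with hΦdef
  have hΦ : ∀ c' : Fin n → ℝ, Φ c' = ∑ i, c' i • e i := by
    intro c'
    simp [hΦdef, Module.Basis.equivFun_symm_apply]
  have hΦs : ∀ i : Fin n, Φ (Pi.single i 1) = e i := by
    intro i
    rw [hΦ]
    simp [Pi.single_apply, ite_smul]
  -- the bilinear form, as a continuous bilinear map
  set Bc : A →L[ℝ] A →L[ℝ] ℝ :=
    LinearMap.toContinuousLinearMap
      ((LinearMap.toContinuousLinearMap :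
          (A →ₗ[ℝ] ℝ) ≃ₗ[ℝ] (A →L[ℝ] ℝ)).toLinearMap ∘ₗ B) with hBcdef
  have hBc : ∀ u v : A, Bc u v = B u v := by
    intro u v
    simp [hBcdef]
  -- the squaring map
  set P : (Fin n → ℝ) → A := fun c' => Φ c' * Φ c' with hPdef
  have hPc : ∀ c' : Fin n → ℝ,
      P c' = (∑ i, c' i • e i) * (∑ i, c' i • e i) := by
    intro c'
    show Φ c' * Φ c' = _
    rw [hΦ]
  have hPder : ∀ c' : Fin n → ℝ, HasFDerivAt P (Φ c' • Φ + Φ c' • Φ) c' := by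
    intro c'
    exact Φ.hasFDerivAt.mul Φ.hasFDerivAt
  set V : Set (Fin n → ℝ) := P ⁻¹' U with hVdef
  have hVopen : IsOpen V := hU.preimage (Φ.continuous.mul Φ.continuous)
  have hcV : c ∈ V := by
    show P c ∈ U
    rw [hPc]; exact hcU
  have hunit : ∀ c' ∈ V, IsUnit (Φ c') := by
    intro c' hc'
    exact isUnit_of_mul_isUnit_left (hUinv _ hc')
  have hFeq : Fc = fun c'' => (1/2 : ℝ) * Bc (P c'') (L (P c'')) := by
    funext c''
    rw [hFc c'', hBc, hPc]
  have hs : ∀ a b : A, B a b = B b a := fun a b => (hsymm.eq b a).symm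
  -- first derivative
  set g1 : (Fin n → ℝ) → ℝ := fun c' => Bc (e α) (Φ c' * L (P c') + Φ c') with hg1def
  have hpd1 : ∀ c' ∈ V, pd Fc α c' = g1 c' := by
    intro c' hc'
    have hd : HasFDerivAt (fun c'' => (1/2 : ℝ) * Bc (P c'') (L (P c'')))
        ((1/2 : ℝ) • (((Bc (P c')).comp
            ((LinearMap.toContinuousLinearMap
              (LinearMap.mulLeft ℝ (Ring.inverse (P c')))).comp (Φ c' • Φ + Φ c' • Φ)))
          + (Bc.comp (Φ c' • Φ + Φ c' • Φ)).flip (L (P c')))) c' := by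
      exact ((Bc.hasFDerivAt.comp c' (hPder c')).clm_apply
        ((hL _ hc').comp c' (hPder c'))).const_mul (1/2 : ℝ)
    rw [← hFeq] at hd
    show fderiv ℝ Fc c' (Pi.single α 1) = _
    rw [hd.fderiv]
    simp only [ContinuousLinearMap.smul_apply, ContinuousLinearMap.add_apply,
      ContinuousLinearMap.coe_comp', Function.comp_apply,
      ContinuousLinearMap.coe_smul', Pi.smul_apply,
      LinearMap.coe_toContinuousLinearMap', LinearMap.mulLeft_apply,
      ContinuousLinearMap.flip_apply, smul_eq_mul, hΦs, hg1def, hBc]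
    have e1 : B (P c') (Ring.inverse (P c') * (Φ c' * e α + Φ c' * e α))
        = B (e α) (Φ c') + B (e α) (Φ c') := by
      rw [← hBinv, Ring.mul_inverse_cancel _ (hUinv _ hc'), map_add]
      have h1 : B (1 : A) (Φ c' * e α) = B (e α) (Φ c') := by
        rw [← hBinv 1 (Φ c') (e α), one_mul]
        exact hs _ _
      rw [h1]
    have e2 : B (Φ c' * e α + Φ c' * e α) (L (P c'))
        = B (e α) (Φ c' * L (P c')) + B (e α) (Φ c' * L (P c')) := by
      have h2 : B (Φ c' * e α) (L (P c')) = B (e α) (Φ c' * L (P c')) := by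
        rw [mul_comm (Φ c') (e α), hBinv]
      rw [map_add, LinearMap.add_apply, h2]
    rw [e1, e2, map_add]
    ring
  -- second derivative
  set g2 : (Fin n → ℝ) → ℝ :=
    fun c' => Bc (e α) (e β * L (P c')) + 3 * Bc (e α) (e β) with hg2def
  have hpd2 : ∀ c' ∈ V, pd (pd Fc α) β c' = g2 c' := by
    intro c' hc'
    have hev : pd Fc α =ᶠ[nhds c'] g1 :=
      Filter.eventuallyEq_of_mem (hVopen.mem_nhds hc') hpd1
    show fderiv ℝ (pd Fc α) c' (Pi.single β 1) = _
    rw [hev.fderiv_eq]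
    have hm : HasFDerivAt (fun c'' => Φ c'' * L (P c'') + Φ c'')
        ((Φ c' • ((LinearMap.toContinuousLinearMap
            (LinearMap.mulLeft ℝ (Ring.inverse (P c')))).comp (Φ c' • Φ + Φ c' • Φ))
          + L (P c') • Φ) + Φ) c' :=
      (Φ.hasFDerivAt.mul ((hL _ hc').comp c' (hPder c'))).add Φ.hasFDerivAt
    have hg1d : HasFDerivAt g1
        ((Bc (e α)).comp
          ((Φ c' • ((LinearMap.toContinuousLinearMap
              (LinearMap.mulLeft ℝ (Ring.inverse (P c')))).comp (Φ c' • Φ + Φ c' • Φ))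
            + L (P c') • Φ) + Φ)) c' := by
      rw [hg1def]
      exact (Bc (e α)).hasFDerivAt.comp c' hm
    rw [hg1d.fderiv]
    simp only [ContinuousLinearMap.smul_apply, ContinuousLinearMap.add_apply,
      ContinuousLinearMap.coe_comp', Function.comp_apply,
      ContinuousLinearMap.coe_smul', Pi.smul_apply,
      LinearMap.coe_toContinuousLinearMap', LinearMap.mulLeft_apply,
      ContinuousLinearMap.flip_apply, smul_eq_mul, hΦs, hg2def, hBc]
    obtain ⟨u, hu⟩ := hunit c' hc'
    have hsq : Φ c' * (Ring.inverse (P c') * (Φ c' * e β + Φ c' * e β)) = e β + e β := by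
      have hP : P c' = Φ c' * Φ c' := rfl
      rw [hP, ← hu]
      exact unit_sq_helper u (e β)
    rw [hsq]
    have h3 : (e β + e β) + L (P c') * e β + e β
        = e β * L (P c') + (e β + e β + e β) := by ring
    rw [h3, map_add, map_add, map_add]
    ring
  -- third derivative
  have hev2 : pd (pd Fc α) β =ᶠ[nhds c] g2 :=
    Filter.eventuallyEq_of_mem (hVopen.mem_nhds hcV) hpd2
  show fderiv ℝ (pd (pd Fc α) β) c (Pi.single γ 1) = _
  rw [hev2.fderiv_eq]
  have hm2 : HasFDerivAt (fun c'' => (e β : A) * L (P c''))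
      ((e β) • ((LinearMap.toContinuousLinearMap
          (LinearMap.mulLeft ℝ (Ring.inverse (P c)))).comp (Φ c • Φ + Φ c • Φ))
        + L (P c) • (0 : (Fin n → ℝ) →L[ℝ] A)) c :=
    (hasFDerivAt_const (e β) c).mul ((hL _ hcV).comp c (hPder c))
  have hg2d : HasFDerivAt g2
      ((Bc (e α)).comp
        ((e β) • ((LinearMap.toContinuousLinearMap
            (LinearMap.mulLeft ℝ (Ring.inverse (P c)))).comp (Φ c • Φ + Φ c • Φ))
          + L (P c) • (0 : (Fin n → ℝ) →L[ℝ] A))) c := by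
    rw [hg2def]
    exact ((Bc (e α)).hasFDerivAt.comp c hm2).add_const _
  rw [hg2d.fderiv]
  simp only [ContinuousLinearMap.smul_apply, ContinuousLinearMap.add_apply,
    ContinuousLinearMap.coe_comp', Function.comp_apply,
    ContinuousLinearMap.coe_smul', Pi.smul_apply,
    LinearMap.coe_toContinuousLinearMap', LinearMap.mulLeft_apply,
    ContinuousLinearMap.zero_apply, smul_zero, add_zero,
    smul_eq_mul, mul_zero, hΦs, hBc]
  rw [← hΦ c]
  obtain ⟨u, hu⟩ := hunit c hcV
  have h2 : Ring.inverse (P c) * (Φ c * e γ + Φ c * e γ)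
      = Ring.inverse (Φ c) * e γ + Ring.inverse (Φ c) * e γ := by
    have hP : P c = Φ c * Φ c := rfl
    rw [hP, ← hu]
    exact unit_sq_helper2 u (e γ)
  rw [h2]
  have h3 : e β * (Ring.inverse (Φ c) * e γ + Ring.inverse (Φ c) * e γ)
      = e β * (e γ * Ring.inverse (Φ c)) + e β * (e γ * Ring.inverse (Φ c)) := by ring
  rw [h3, map_add, ← hBinv, ← hBinv]
  ring
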